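/- Let Q be an n×n real symmetric matrix with spectral decomposition Q = W diag(λ) W^T where W is orthogonal. For μ > 0, the unique minimizer of Tr(L) + (μ/2)‖L − Q‖_F² over symmetric positive semidefinite matrices L is L* = W diag(max{λ − μ⁻¹𝟙, 0}) W^T, where the max is taken componentwise. -/

import Mathlib

open Matrix

private lemma ct_eq (n : ℕ) (W : Matrix (Fin n) (Fin n) ℝ) : Wᴴ = Wᵀ :=
  conjTranspose_eq_transpose_of_trivial W

private lemma sum_eq_trace (n : ℕ) (X Y : Matrix (Fin n) (Fin n) ℝ) :
    ∑ i, ∑ j, X i j * Y i j = (X * Yᵀ).trace := by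
  simp [Matrix.trace, Matrix.mul_apply, Matrix.diag]

private lemma diag_nonneg {n : ℕ} {M : Matrix (Fin n) (Fin n) ℝ} (hM : M.PosSemidef)
    (i : Fin n) : 0 ≤ M i i := by
  exact hM.diag_nonneg

private lemma trace_mul_psd_nonneg {n : ℕ} {L W : Matrix (Fin n) (Fin n) ℝ}
    (hL : L.PosSemidef) (hWo : Wᵀ * W = 1) {b : Fin n → ℝ} (hb : ∀ i, 0 ≤ b i) :
    0 ≤ (L * (W * Matrix.diagonal b * Wᵀ)).trace := by
  have hM : (Wᵀ * L * W).PosSemidef := by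
    have := hL.conjTranspose_mul_mul_same W
    rwa [ct_eq] at this
  have h1 : (L * (W * Matrix.diagonal b * Wᵀ)).trace
      = ((Wᵀ * L * W) * Matrix.diagonal b).trace := by
    rw [show L * (W * Matrix.diagonal b * Wᵀ) = L * (W * Matrix.diagonal b) * Wᵀ by
      noncomm_ring, Matrix.trace_mul_comm]
    noncomm_ring
  rw [h1]
  rw [Matrix.trace]
  apply Finset.sum_nonneg
  intro i _
  have : ((Wᵀ * L * W) * Matrix.diagonal b).diag i = (Wᵀ * L * W) i i * b i := by
    simp [Matrix.diag, Matrix.mul_apply, Matrix.diagonal, Finset.sum_ite_eq]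
  rw [this]
  exact mul_nonneg (diag_nonneg hM i) (hb i)

theorem stmt_7 (n : ℕ) (μ : ℝ) (hμ : 0 < μ)
    (Q W : Matrix (Fin n) (Fin n) ℝ) (lam : Fin n → ℝ)
    (hQsymm : Q.IsHermitian)
    (hW : W * Wᵀ = 1 ∧ Wᵀ * W = 1)
    (hQ : Q = W * Matrix.diagonal lam * Wᵀ)
    (Lstar : Matrix (Fin n) (Fin n) ℝ)
    (hLstar : Lstar = W * Matrix.diagonal (fun i => max (lam i - μ⁻¹) 0) * Wᵀ)
    (F : Matrix (Fin n) (Fin n) ℝ → ℝ)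
    (hF : ∀ L, F L = L.trace + μ / 2 * ∑ i, ∑ j, (L i j - Q i j) ^ 2) :
    Lstar.PosSemidef ∧ (∀ L, L.PosSemidef → F Lstar ≤ F L) ∧
      ∀ L, L.PosSemidef → (∀ L', L'.PosSemidef → F L ≤ F L') → L = Lstar := by
  obtain ⟨hW1, hW2⟩ := hW
  set b : Fin n → ℝ := fun i => max (μ⁻¹ - lam i) 0 with hb
  set N : Matrix (Fin n) (Fin n) ℝ := W * Matrix.diagonal b * Wᵀ with hN
  -- Lstar PSD
  have hLstarPSD : Lstar.PosSemidef := by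
    rw [hLstar]
    have := (Matrix.PosSemidef.diagonal (R := ℝ)
      (d := fun i => max (lam i - μ⁻¹) 0)
      (fun i => le_max_right _ _)).mul_mul_conjTranspose_same W
    rwa [ct_eq] at this
  -- N entrywise equals Lstar - Q + μ⁻¹ • 1
  have hNentry : N = Lstar - Q + μ⁻¹ • (1 : Matrix (Fin n) (Fin n) ℝ) := by
    have h1 : μ⁻¹ • (1 : Matrix (Fin n) (Fin n) ℝ)
        = W * Matrix.diagonal (fun _ => μ⁻¹) * Wᵀ := by
      rw [show Matrix.diagonal (fun _ : Fin n => μ⁻¹)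
          = μ⁻¹ • (1 : Matrix (Fin n) (Fin n) ℝ) by
        simp [Matrix.smul_eq_diagonal_mul]]
      rw [Matrix.mul_smul, Matrix.smul_mul, mul_one, hW1]
    rw [hLstar, hQ, h1, hN, ← Matrix.sub_mul, ← Matrix.mul_sub, ← Matrix.add_mul,
      ← Matrix.mul_add, Matrix.diagonal_sub, Matrix.diagonal_add]
    have hfun : b = fun i => max (lam i - μ⁻¹) 0 - lam i + μ⁻¹ := by
      funext i
      simp only [hb]
      rcases le_total (lam i) μ⁻¹ with h | h
      · rw [max_eq_left (by linarith : (0:ℝ) ≤ μ⁻¹ - lam i),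
          max_eq_right (by linarith : lam i - μ⁻¹ ≤ (0:ℝ))]; ring
      · rw [max_eq_right (by linarith : μ⁻¹ - lam i ≤ (0:ℝ)),
          max_eq_left (by linarith : (0:ℝ) ≤ lam i - μ⁻¹)]; ring
    rw [hfun]
  have hNsymm : Nᵀ = N := by
    rw [hN]
    simp [Matrix.transpose_mul, Matrix.diagonal_transpose, Matrix.mul_assoc]
  -- inner product of Lstar and N is zero
  have hLN : ∑ i, ∑ j, Lstar i j * N i j = 0 := by
    rw [sum_eq_trace, hNsymm, hLstar, hN]
    have : W * Matrix.diagonal (fun i => max (lam i - μ⁻¹) 0) * Wᵀ *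
        (W * Matrix.diagonal b * Wᵀ)
        = W * (Matrix.diagonal (fun i => max (lam i - μ⁻¹) 0) * Matrix.diagonal b) * Wᵀ := by
      simp only [Matrix.mul_assoc]
      rw [← Matrix.mul_assoc Wᵀ W, hW2, Matrix.one_mul]
    rw [this, Matrix.diagonal_mul_diagonal]
    have hz : (fun i => max (lam i - μ⁻¹) 0 * b i) = fun _ => (0 : ℝ) := by
      funext i
      simp only [hb]
      rcases le_total (lam i) μ⁻¹ with h | h
      · rw [max_eq_right (by linarith)]; ring
      · rw [max_eq_right (a := μ⁻¹ - lam i) (by linarith)]; ring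
    rw [hz]
    simp
  -- key identity
  have key : ∀ L : Matrix (Fin n) (Fin n) ℝ,
      F L - F Lstar = μ / 2 * (∑ i, ∑ j, (L i j - Lstar i j) ^ 2)
        + μ * ∑ i, ∑ j, (L i j - Lstar i j) * N i j := by
    intro L
    rw [hF, hF]
    have htr : L.trace - Lstar.trace
        = ∑ i, ∑ j, (L i j - Lstar i j) * (1 : Matrix (Fin n) (Fin n) ℝ) i j := by
      simp [Matrix.trace, Matrix.diag, Matrix.one_apply, mul_ite, Finset.sum_ite_eq',
        Finset.sum_sub_distrib]
    have hNe : ∀ i j, N i j = (Lstar i j - Q i j) + μ⁻¹ * (1 : Matrix (Fin n) (Fin n) ℝ) i j := by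
      intro i j
      rw [hNentry]
      simp [Matrix.sub_apply, Matrix.add_apply]
    have expand : ∀ i j, μ / 2 * (L i j - Q i j) ^ 2 - μ / 2 * (Lstar i j - Q i j) ^ 2
        = μ / 2 * (L i j - Lstar i j) ^ 2
          + μ * ((L i j - Lstar i j) * N i j)
          - (L i j - Lstar i j) * (1 : Matrix (Fin n) (Fin n) ℝ) i j := by
      intro i j
      rw [hNe i j]
      field_simp
      ring
    have : μ / 2 * (∑ i, ∑ j, (L i j - Q i j) ^ 2)
        - μ / 2 * (∑ i, ∑ j, (Lstar i j - Q i j) ^ 2)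
        = μ / 2 * (∑ i, ∑ j, (L i j - Lstar i j) ^ 2)
          + μ * (∑ i, ∑ j, (L i j - Lstar i j) * N i j)
          - ∑ i, ∑ j, (L i j - Lstar i j) * (1 : Matrix (Fin n) (Fin n) ℝ) i j := by
      simp only [Finset.mul_sum, ← Finset.sum_sub_distrib, ← Finset.sum_add_distrib]
      apply Finset.sum_congr rfl; intro i _
      apply Finset.sum_congr rfl; intro j _
      have := expand i j
      linarith
    linarith
  -- nonnegativity of the two terms for PSD L
  have hterms : ∀ L : Matrix (Fin n) (Fin n) ℝ, L.PosSemidef →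
      0 ≤ ∑ i, ∑ j, (L i j - Lstar i j) * N i j := by
    intro L hL
    have h1 : ∑ i, ∑ j, (L i j - Lstar i j) * N i j
        = ∑ i, ∑ j, L i j * N i j - ∑ i, ∑ j, Lstar i j * N i j := by
      simp [sub_mul, Finset.sum_sub_distrib]
    rw [h1, hLN, sub_zero, sum_eq_trace, hNsymm, hN]
    exact trace_mul_psd_nonneg hL hW2 (fun i => le_max_right _ _)
  have hsq : ∀ L : Matrix (Fin n) (Fin n) ℝ,
      0 ≤ ∑ i, ∑ j, (L i j - Lstar i j) ^ 2 :=
    fun L => Finset.sum_nonneg fun i _ => Finset.sum_nonneg fun j _ => sq_nonneg _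
  refine ⟨hLstarPSD, fun L hL => ?_, fun L hL hmin => ?_⟩
  · have := key L
    nlinarith [hterms L hL, hsq L, hμ.le]
  · have h1 : F L = F Lstar := le_antisymm (hmin Lstar hLstarPSD)
      (by have := key L; nlinarith [hterms L hL, hsq L, hμ.le])
    have h2 := key L
    rw [h1, sub_self] at h2
    have hS : ∑ i, ∑ j, (L i j - Lstar i j) ^ 2 = 0 := by
      nlinarith [hterms L hL, hsq L]
    ext i j
    have : (L i j - Lstar i j) ^ 2 = 0 := by
      have h3 : ∀ i ∈ Finset.univ, (0:ℝ) ≤ ∑ j, (L i j - Lstar i j) ^ 2 :=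
        fun i _ => Finset.sum_nonneg fun j _ => sq_nonneg _
      have h4 := (Finset.sum_eq_zero_iff_of_nonneg h3).mp hS i (Finset.mem_univ i)
      exact (Finset.sum_eq_zero_iff_of_nonneg
        (fun j _ => sq_nonneg _)).mp h4 j (Finset.mem_univ j)
    have := pow_eq_zero_iff (n := 2) (by norm_num) |>.mp this
    linarith [sub_eq_zero.mp this, (sub_eq_zero.mp this : L i j = Lstar i j)]
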